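/- Let Γ be a group with finite symmetric generating set S of size D, and let K ⊆ Γ be a finite nonempty set. Suppose r ≥ 1 is such that for every subset S' ⊆ S of size at least D/2 which generates a subgroup Γ' of Γ, the ball of radius r in Cay(Γ',S') has at least 2|K| elements. Then the edge boundary satisfies |∂_E K| / (D|K|) ≥ 1/(16 r). -/

import Mathlib

open scoped Classical

/-- The ball of radius `n` around the identity in the Cayley graph of (the
subgroup generated by) `S`. -/
def cayleyBall {Γ : Type u} [Group Γ] (S : Finset Γ) (n : ℕ) : Set Γ :=
  {x | ∃ l : List Γ, (∀ g ∈ l, g ∈ S) ∧ l.length ≤ n ∧ l.prod = x}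

/-- If `P 0` holds and `P n` fails, there is a crossing index. -/
lemma exists_crossing (P : ℕ → Prop) (n : ℕ) (h0 : P 0) (hn : ¬ P n) :
    ∃ i < n, P i ∧ ¬ P (i + 1) := by
  induction n with
  | zero => exact absurd h0 hn
  | succ n ih =>
    by_cases hPn : P n
    · exact ⟨n, Nat.lt_succ_self n, hPn, hn⟩
    · obtain ⟨i, hi, h1, h2⟩ := ih hPn
      exact ⟨i, hi.trans (Nat.lt_succ_self n), h1, h2⟩

/-- Vertex-exit lemma: a big ball for `S'` forces some generator in `S'` to
have many outgoing boundary edges. -/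
lemma exists_good_gen {Γ : Type*} [Group Γ] (K : Finset Γ) (hK : K.Nonempty)
    (r : ℕ) (hr : 1 ≤ r) (S' : Finset Γ)
    (hball : 2 * K.card ≤ Nat.card (cayleyBall S' r)) :
    ∃ g ∈ S', K.card ≤ 2 * r * (K.filter (fun x => x * g ∉ K)).card := by
  have hKpos : 0 < K.card := Finset.card_pos.2 hK
  -- the ball is finite
  have hfin : (cayleyBall S' r).Finite := by
    apply Set.finite_of_ncard_ne_zero
    rw [← Nat.card_coe_set_eq]
    omega
  set Bf := hfin.toFinset with hBf
  have hBcard : 2 * K.card ≤ Bf.card := by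
    have h1 : Nat.card (cayleyBall S' r) = Bf.card := by
      rw [Nat.card_coe_set_eq, ← Set.ncard_coe_finset Bf, hfin.coe_toFinset]
    omega
  -- averaging: some w ∈ Bf with |K ∩ Kw⁻¹| ≤ |K|/2
  set f : Γ → ℕ := fun w => (K.filter (fun x => x * w ∈ K)).card with hf
  have hsum : ∑ w ∈ Bf, f w ≤ K.card * K.card := by
    have : ∑ w ∈ Bf, f w = ∑ x ∈ K, (Bf.filter (fun w => x * w ∈ K)).card := by
      simp only [hf, Finset.card_filter]
      rw [Finset.sum_comm]
    rw [this]
    have hbound : ∀ x ∈ K, (Bf.filter (fun w => x * w ∈ K)).card ≤ K.card := by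
      intro x _
      refine Finset.card_le_card_of_injOn (fun w => x * w) ?_ ?_
      · intro w hw; exact (Finset.mem_filter.1 hw).2
      · intro a _ b _ hab; exact mul_left_cancel hab
    calc ∑ x ∈ K, (Bf.filter (fun w => x * w ∈ K)).card
        ≤ ∑ _x ∈ K, K.card := Finset.sum_le_sum hbound
      _ = K.card * K.card := by rw [Finset.sum_const, smul_eq_mul]
  have hw : ∃ w ∈ Bf, 2 * f w ≤ K.card := by
    by_contra h
    push_neg at h
    have h1 : Bf.card * (K.card + 1) ≤ 2 * (K.card * K.card) := by
      have h2 : ∑ _w ∈ Bf, (K.card + 1) ≤ ∑ w ∈ Bf, 2 * f w :=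
        Finset.sum_le_sum (fun w hwB => h w hwB)
      rw [Finset.sum_const, smul_eq_mul, ← Finset.mul_sum] at h2
      calc Bf.card * (K.card + 1) ≤ 2 * ∑ w ∈ Bf, f w := h2
        _ ≤ 2 * (K.card * K.card) := by omega
    nlinarith [hBcard, hKpos, h1]
  obtain ⟨w, hwB, hwle⟩ := hw
  have hwball : w ∈ cayleyBall S' r := by rwa [← hfin.mem_toFinset]
  obtain ⟨l, hlS, hllen, hlprod⟩ := hwball
  -- the exit set
  set X : Finset Γ := K.filter (fun x => x * w ∉ K) with hX
  have hXcard : K.card ≤ 2 * X.card := by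
    have h2 : f w + X.card = K.card := by
      rw [hf, hX]
      exact Finset.card_filter_add_card_filter_not (fun x => x * w ∈ K)
    omega
  have hXne : X.Nonempty := Finset.card_pos.1 (by omega)
  -- l is nonempty
  have hlen : 0 < l.length := by
    rcases Nat.eq_zero_or_pos l.length with h0 | h
    · exfalso
      obtain ⟨x, hx⟩ := hXne
      rw [hX, Finset.mem_filter] at hx
      have hw1 : w = 1 := by
        rw [← hlprod, List.length_eq_zero_iff.1 h0]; simp
      rw [hw1, mul_one] at hx
      exact hx.2 hx.1
    · exact h
  -- crossing sets
  set cr : ℕ → Finset Γ := fun i => X.filter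
    (fun x => x * (l.take i).prod ∈ K ∧ x * (l.take (i + 1)).prod ∉ K) with hcr
  have hXsub : X ⊆ (Finset.range l.length).biUnion cr := by
    intro x hx
    rw [hX, Finset.mem_filter] at hx
    obtain ⟨i, hi, h1, h2⟩ := exists_crossing (fun i => x * (l.take i).prod ∈ K)
      l.length (by simpa using hx.1) (by
        show x * (l.take l.length).prod ∉ K
        rw [List.take_length, hlprod]; exact hx.2)
    rw [Finset.mem_biUnion]
    refine ⟨i, Finset.mem_range.2 hi, ?_⟩
    rw [hcr]
    exact Finset.mem_filter.2 ⟨Finset.mem_filter.2 hx, h1, h2⟩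
  have hXsum : X.card ≤ ∑ i ∈ Finset.range l.length, (cr i).card :=
    (Finset.card_le_card hXsub).trans (Finset.card_biUnion_le)
  -- pigeonhole
  have hpig : ∃ i < l.length, X.card ≤ l.length * (cr i).card := by
    by_contra h
    push_neg at h
    have h1 : ∀ i ∈ Finset.range l.length, l.length * (cr i).card ≤ X.card - 1 := by
      intro i hi
      have := h i (Finset.mem_range.1 hi)
      omega
    have h2 : ∑ i ∈ Finset.range l.length, l.length * (cr i).card
        ≤ l.length * (X.card - 1) := by
      calc ∑ i ∈ Finset.range l.length, l.length * (cr i).card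
          ≤ ∑ _i ∈ Finset.range l.length, (X.card - 1) := Finset.sum_le_sum h1
        _ = l.length * (X.card - 1) := by simp [mul_comm]
    rw [← Finset.mul_sum] at h2
    have h3 : ∑ i ∈ Finset.range l.length, (cr i).card ≤ X.card - 1 :=
      Nat.le_of_mul_le_mul_left h2 hlen
    have hXpos : 0 < X.card := Finset.card_pos.2 hXne
    omega
  obtain ⟨i, hi, hile⟩ := hpig
  refine ⟨l[i], hlS _ (List.getElem_mem hi), ?_⟩
  -- injection from cr i into the boundary-edge set of generator l[i]
  have hinj : (cr i).card ≤ (K.filter (fun x => x * l[i] ∉ K)).card := by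
    refine Finset.card_le_card_of_injOn (fun x => x * (l.take i).prod) ?_ ?_
    · intro x hx
      rw [hcr, Finset.mem_coe, Finset.mem_filter] at hx
      refine Finset.mem_filter.2 ⟨hx.2.1, ?_⟩
      have := hx.2.2
      rwa [List.prod_take_succ _ _ hi, ← mul_assoc] at this
    · intro a _ b _ hab; exact mul_right_cancel hab
  calc K.card ≤ 2 * X.card := hXcard
    _ ≤ 2 * (l.length * (cr i).card) := by omega
    _ ≤ 2 * (r * (K.filter (fun x => x * l[i] ∉ K)).card) := by
        have : l.length * (cr i).card ≤ r * (K.filter (fun x => x * l[i] ∉ K)).card :=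
          Nat.mul_le_mul hllen hinj
        omega
    _ = 2 * r * (K.filter (fun x => x * l[i] ∉ K)).card := by ring

theorem edge_isoperimetry
    {Γ : Type*} [Group Γ] (S : Finset Γ) (D : ℕ) (hD : S.card = D) (hDpos : 1 ≤ D)
    (hsymm : ∀ s ∈ S, s⁻¹ ∈ S)
    (hgen : Subgroup.closure (S : Set Γ) = ⊤)
    (K : Finset Γ) (hK : K.Nonempty)
    (r : ℕ) (hr : 1 ≤ r)
    (hball : ∀ S' : Finset Γ, S' ⊆ S → (D : ℝ) / 2 ≤ S'.card →
      2 * K.card ≤ Nat.card (cayleyBall S' r)) :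
    (1 : ℝ) / (16 * r) ≤
      (Set.ncard {q : Γ × Γ | q.1 ∈ K ∧ q.2 ∉ K ∧ ∃ s ∈ S, q.1 * s = q.2} : ℝ) /
        (D * K.card) := by
  have hKpos : 0 < K.card := Finset.card_pos.2 hK
  set m : ℕ := max (D / 4) 1 with hm
  -- iterate the vertex-exit lemma
  have key : ∀ n ≤ m, ∃ T : Finset Γ, T ⊆ S ∧ T.card = n ∧
      ∀ g ∈ T, K.card ≤ 2 * r * (K.filter (fun x => x * g ∉ K)).card := by
    intro n hn
    induction n with
    | zero => exact ⟨∅, Finset.empty_subset _, rfl, by simp⟩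
    | succ n ih =>
      obtain ⟨T, hTS, hTcard, hTgood⟩ := ih (le_trans (Nat.le_succ n) hn)
      have h2n : 2 * n ≤ D := by omega
      have hScard : (S \ T).card = D - n := by
        rw [Finset.card_sdiff_of_subset hTS, hD, hTcard]
      have hhalf : (D : ℝ) / 2 ≤ ((S \ T).card : ℝ) := by
        rw [hScard]
        rw [Nat.cast_sub (by omega)]
        have : (n : ℝ) ≤ (D : ℝ) / 2 := by
          rw [le_div_iff₀ (by norm_num)]
          exact_mod_cast (by omega : n * 2 ≤ D)
        linarith
      obtain ⟨g, hgS', hggood⟩ := exists_good_gen K hK r hr (S \ T)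
        (hball (S \ T) (Finset.sdiff_subset) hhalf)
      have hgT : g ∉ T := (Finset.mem_sdiff.1 hgS').2
      refine ⟨insert g T, ?_, ?_, ?_⟩
      · exact Finset.insert_subset ((Finset.mem_sdiff.1 hgS').1) hTS
      · rw [Finset.card_insert_of_notMem hgT, hTcard]
      · intro g' hg'
        rcases Finset.mem_insert.1 hg' with h | h
        · rwa [h]
        · exact hTgood g' h
  obtain ⟨T, hTS, hTcard, hTgood⟩ := key m le_rfl
  -- the boundary edge set as a Finset
  set Q : Finset (Γ × Γ) :=
    (K ×ˢ K.biUnion (fun x => S.image (fun s => x * s))).filter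
      (fun q => q.2 ∉ K ∧ ∃ s ∈ S, q.1 * s = q.2) with hQ
  have hPQ : {q : Γ × Γ | q.1 ∈ K ∧ q.2 ∉ K ∧ ∃ s ∈ S, q.1 * s = q.2} = ↑Q := by
    ext ⟨a, b⟩
    simp only [Set.mem_setOf_eq, hQ, Finset.coe_filter, Finset.mem_product,
      Finset.mem_biUnion, Finset.mem_image, Set.mem_setOf_eq]
    constructor
    · rintro ⟨ha, hb, s, hs, hab⟩
      exact ⟨⟨ha, ⟨a, ha, s, hs, hab⟩⟩, hb, s, hs, hab⟩
    · rintro ⟨⟨ha, _⟩, hb, s, hs, hab⟩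
      exact ⟨ha, hb, s, hs, hab⟩
  -- the disjoint union of labelled boundary edges sits inside Q
  set U : Finset (Γ × Γ) := T.biUnion
    (fun g => (K.filter (fun x => x * g ∉ K)).image (fun x => (x, x * g))) with hU
  have hUQ : U ⊆ Q := by
    intro q hq
    rw [hU, Finset.mem_biUnion] at hq
    obtain ⟨g, hgT, hq⟩ := hq
    obtain ⟨x, hx, rfl⟩ := Finset.mem_image.1 hq
    rw [Finset.mem_filter] at hx
    refine Finset.mem_filter.2 ⟨?_, hx.2, g, hTS hgT, rfl⟩
    refine Finset.mem_product.2 ⟨hx.1, ?_⟩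
    exact Finset.mem_biUnion.2 ⟨x, hx.1, Finset.mem_image.2 ⟨g, hTS hgT, rfl⟩⟩
  have hUcard : U.card = ∑ g ∈ T, (K.filter (fun x => x * g ∉ K)).card := by
    rw [hU, Finset.card_biUnion]
    · refine Finset.sum_congr rfl (fun g _ => ?_)
      rw [Finset.card_image_of_injOn]
      intro a _ b _ hab
      exact (Prod.mk.injEq _ _ _ _ ▸ hab).1
    · intro g₁ h₁ g₂ h₂ hne
      simp only [Finset.disjoint_left]
      intro q hq₁ hq₂
      obtain ⟨x, _, rfl⟩ := Finset.mem_image.1 hq₁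
      obtain ⟨y, _, hy⟩ := Finset.mem_image.1 hq₂
      have h1 : y = x := (Prod.mk.injEq _ _ _ _ ▸ hy).1
      have h2 : y * g₂ = x * g₁ := (Prod.mk.injEq _ _ _ _ ▸ hy).2
      rw [h1] at h2
      exact hne (mul_left_cancel h2).symm
  -- lower-bound |Q| in ℕ
  have hsum : m * K.card ≤ 2 * r * U.card := by
    rw [hUcard, Finset.mul_sum]
    calc m * K.card = ∑ _g ∈ T, K.card := by rw [Finset.sum_const, hTcard, smul_eq_mul]
      _ ≤ ∑ g ∈ T, 2 * r * (K.filter (fun x => x * g ∉ K)).card :=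
          Finset.sum_le_sum (fun g hg => hTgood g hg)
  have hQcard : D * K.card ≤ 16 * r * Q.card := by
    have hUQ' : U.card ≤ Q.card := Finset.card_le_card hUQ
    have h8m : D ≤ 8 * m := by omega
    calc D * K.card ≤ 8 * m * K.card := Nat.mul_le_mul_right _ h8m
      _ = 8 * (m * K.card) := by ring
      _ ≤ 8 * (2 * r * U.card) := by omega
      _ = 16 * r * U.card := by ring
      _ ≤ 16 * r * Q.card := Nat.mul_le_mul_left _ hUQ'
  -- conclude over ℝ
  rw [hPQ, Set.ncard_coe_finset]
  rw [div_le_div_iff₀ (by positivity) (by positivity)]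
  have : (D : ℝ) * K.card ≤ 16 * r * Q.card := by exact_mod_cast hQcard
  nlinarith [this]
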